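/- Let n ≥ 2 and let a_0, …, a_n be real numbers. For a real number x define the Reinsch sequences by d_n(x) = a_n, u_n(x) = a_n, and for k = n−1 down to 0: d_k(x) = 2(x−1)·u_{k+1}(x) + d_{k+1}(x) + a_k and u_k(x) = d_k(x) + u_{k+1}(x). Then the Reinsch sequence u_k coincides with the Clenshaw sequence: u_{n−1}(x) = 2x·u_n(x) + a_{n−1}, u_k(x) = 2x·u_{k+1}(x) − u_{k+2}(x) + a_k for 0 ≤ k ≤ n−2, and consequently p(x) = x·u_1(x) − u_2(x) + a_0. -/
import Mathlib


open Polynomial Finset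

/-- The Reinsch variant of the Clenshaw algorithm computes the Clenshaw sequence,
hence evaluates `p(x) = ∑ aᵢ Tᵢ(x)`. -/
theorem reinsch_eq_clenshaw (n : ℕ) (hn : 2 ≤ n) (a : ℕ → ℝ) (x : ℝ) (d u : ℕ → ℝ)
    (hdn : d n = a n) (hun : u n = a n)
    (hrec : ∀ k, k < n → d k = 2 * (x - 1) * u (k + 1) + d (k + 1) + a k ∧
      u k = d k + u (k + 1)) :
    u (n - 1) = 2 * x * u n + a (n - 1) ∧
    (∀ k, k ≤ n - 2 → u k = 2 * x * u (k + 1) - u (k + 2) + a k) ∧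
    x * u 1 - u 2 + a 0 =
      ∑ i ∈ Finset.range (n + 1), a i * (Polynomial.Chebyshev.T ℝ i).eval x := by
  have hn1 : n - 1 < n := by omega
  have h1 : u (n - 1) = 2 * x * u n + a (n - 1) := by
    obtain ⟨hd, hu⟩ := hrec (n-1) hn1
    have e : n - 1 + 1 = n := by omega
    rw [e] at hd hu
    rw [hu, hd, hdn, hun]; ring
  have h2 : ∀ k, k ≤ n - 2 → u k = 2 * x * u (k + 1) - u (k + 2) + a k := by
    intro k hk
    obtain ⟨hd, hu⟩ := hrec k (by omega)
    obtain ⟨hd', hu'⟩ := hrec (k+1) (by omega)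
    have hkd : d (k+1) = u (k+1) - u (k+2) := by rw [hu']; ring
    rw [hu, hd, hkd]; ring
  refine ⟨h1, h2, ?_⟩
  have key : ∀ j k : ℕ, 1 ≤ k → k + j = n - 1 →
      ∑ i ∈ Finset.range (n + 1), a i * (Polynomial.Chebyshev.T ℝ i).eval x =
      ∑ i ∈ Finset.range k, a i * (Polynomial.Chebyshev.T ℝ i).eval x
        + u k * (Polynomial.Chebyshev.T ℝ k).eval x
        - u (k+1) * (Polynomial.Chebyshev.T ℝ ((k:ℤ) - 1)).eval x := by
    intro j
    induction j with
    | zero =>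
      intro k hk1 hk
      have hkn : k = n - 1 := by omega
      subst hkn
      have e1 : n + 1 = (n - 1) + 1 + 1 := by omega
      rw [e1, Finset.sum_range_succ, Finset.sum_range_succ]
      have e2 : n - 1 + 1 = n := by omega
      rw [e2, h1, hun]
      have eT : (Polynomial.Chebyshev.T ℝ (n:ℤ)) =
          2 * Polynomial.X * Polynomial.Chebyshev.T ℝ ((n:ℤ) - 1)
            - Polynomial.Chebyshev.T ℝ ((n:ℤ) - 2) := by
        have h := Polynomial.Chebyshev.T_add_two ℝ ((n:ℤ) - 2)
        have e3 : ((n:ℤ) - 2) + 2 = (n:ℤ) := by ring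
        have e4 : ((n:ℤ) - 2) + 1 = (n:ℤ) - 1 := by ring
        rw [e3, e4] at h
        rw [h]
      have e5 : ((n-1:ℕ):ℤ) = (n:ℤ) - 1 := by
        push_cast [Nat.cast_sub (by omega : 1 ≤ n)]; ring
      have e6 : (n:ℤ) - 1 - 1 = (n:ℤ) - 2 := by ring
      rw [eT, e5, e6]
      simp only [Polynomial.eval_sub, Polynomial.eval_mul, Polynomial.eval_ofNat,
        Polynomial.eval_X]
      ring
    | succ j ih =>
      intro k hk1 hk
      have hh := ih (k+1) (by omega) (by omega)
      rw [hh]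
      have hu := h2 k (by omega)
      rw [Finset.sum_range_succ]
      have eT : Polynomial.Chebyshev.T ℝ ((k:ℤ) + 1) =
          2 * Polynomial.X * Polynomial.Chebyshev.T ℝ (k:ℤ)
            - Polynomial.Chebyshev.T ℝ ((k:ℤ) - 1) := by
        have h := Polynomial.Chebyshev.T_add_two ℝ ((k:ℤ) - 1)
        have e3 : ((k:ℤ) - 1) + 2 = (k:ℤ) + 1 := by ring
        have e4 : ((k:ℤ) - 1) + 1 = (k:ℤ) := by ring
        rw [e3, e4] at h
        rw [h]
      have ek : ((k+1:ℕ):ℤ) = (k:ℤ) + 1 := by push_cast; ring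
      have ek3 : (k:ℤ) + 1 - 1 = (k:ℤ) := by ring
      have e7 : k + 1 + 1 = k + 2 := rfl
      rw [ek, ek3, eT, hu, e7]
      simp only [Polynomial.eval_sub, Polynomial.eval_mul, Polynomial.eval_ofNat,
        Polynomial.eval_X]
      ring
  have hk := key (n - 2) 1 (by omega) (by omega)
  rw [hk]
  norm_num [Polynomial.Chebyshev.T_one, Polynomial.Chebyshev.T_zero]
  ring
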